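/- Let b > 0 and let g : (0,b) → ℝ³ be a C² curve with |g(r)| = 1 for all r, satisfying g''(r) + (1/r)·g'(r) + |g'(r)|²·g(r) = 0 on (0,b). If |g'| is bounded on some interval (0,ε) with 0 < ε ≤ b, then g' ≡ 0 on (0,b), i.e. g is constant. -/
import Mathlib


open scoped BigOperators

noncomputable section

abbrev E3 := EuclideanSpace ℝ (Fin 3)

open scoped RealInnerProductSpace
open Filter Topology

/-- A `C²` unit-vector solution `g : (0,b) → ℝ³` of the radial harmonic
map equation `g'' + g'/r + |g'|² g = 0` whose derivative is bounded near `r = 0` is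
constant: `g' ≡ 0` on `(0,b)`. -/
theorem radial_harmonic_map_constant
    (b : ℝ) (hb : 0 < b) (g : ℝ → E3)
    (hg : ContDiffOn ℝ 2 g (Set.Ioo 0 b))
    (hunit : ∀ r ∈ Set.Ioo (0 : ℝ) b, ‖g r‖ = 1)
    (hode : ∀ r ∈ Set.Ioo (0 : ℝ) b,
      deriv (deriv g) r + (1 / r) • deriv g r + (‖deriv g r‖ ^ 2) • g r = 0)
    (ε : ℝ) (hε : 0 < ε) (hεb : ε ≤ b)
    (M : ℝ) (hM : ∀ r ∈ Set.Ioo (0 : ℝ) ε, ‖deriv g r‖ ≤ M) :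
    (∀ r ∈ Set.Ioo (0 : ℝ) b, deriv g r = 0) ∧
    ∃ v : E3, ∀ r ∈ Set.Ioo (0 : ℝ) b, g r = v := by
  set s : Set ℝ := Set.Ioo 0 b with hs
  have hsopen : IsOpen s := isOpen_Ioo
  have hconv : Convex ℝ s := convex_Ioo 0 b
  have hgd : ∀ x ∈ s, HasDerivAt g (deriv g x) x := by
    intro x hx
    exact ((hg.differentiableOn (by norm_num)).differentiableAt
      (hsopen.mem_nhds hx)).hasDerivAt
  have hg' : ContDiffOn ℝ 1 (deriv g) s := hg.deriv_of_isOpen hsopen (by norm_num)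
  have hgd2 : ∀ x ∈ s, HasDerivAt (deriv g) (deriv (deriv g) x) x := by
    intro x hx
    exact ((hg'.differentiableOn (by norm_num)).differentiableAt
      (hsopen.mem_nhds hx)).hasDerivAt
  -- orthogonality
  have horth : ∀ x ∈ s, ⟪deriv g x, g x⟫ = 0 := by
    intro x hx
    have h1 : HasDerivAt (fun t => ⟪g t, g t⟫)
        (⟪g x, deriv g x⟫ + ⟪deriv g x, g x⟫) x :=
      (hgd x hx).inner ℝ (hgd x hx)
    have h2 : HasDerivAt (fun t => ⟪g t, g t⟫) 0 x := by
      have hev : (fun t => ⟪g t, g t⟫) =ᶠ[𝓝 x] fun _ => (1 : ℝ) := by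
        filter_upwards [hsopen.mem_nhds hx] with t ht
        rw [real_inner_self_eq_norm_sq, hunit t ht]; norm_num
      exact (hasDerivAt_const x (1 : ℝ)).congr_of_eventuallyEq hev
    have h3 := h1.unique h2
    have hsym : ⟪g x, deriv g x⟫ = ⟪deriv g x, g x⟫ := real_inner_comm _ _
    rw [hsym] at h3
    linarith
  set φ : ℝ → ℝ := fun r => r ^ 2 * ⟪deriv g r, deriv g r⟫ with hφdef
  have hφ : ∀ x ∈ s, HasDerivAt φ 0 x := by
    intro x hx
    have hxpos : (0 : ℝ) < x := hx.1
    have hr : HasDerivAt (fun r : ℝ => r ^ 2) (2 * x) x := by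
      simpa using hasDerivAt_pow 2 x
    have hi : HasDerivAt (fun r => ⟪deriv g r, deriv g r⟫)
        (⟪deriv g x, deriv (deriv g) x⟫ + ⟪deriv (deriv g) x, deriv g x⟫) x :=
      (hgd2 x hx).inner ℝ (hgd2 x hx)
    have hmul := hr.mul hi
    have hdd : deriv (deriv g) x =
        -((1 / x) • deriv g x) - (‖deriv g x‖ ^ 2) • g x := by
      have := hode x hx
      have : deriv (deriv g) x + (1 / x) • deriv g x + (‖deriv g x‖ ^ 2) • g x = 0 := this
      abel_nf at this ⊢
      linear_combination (norm := module) this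
    have hK : ⟪deriv g x, deriv (deriv g) x⟫ = -(1 / x) * ⟪deriv g x, deriv g x⟫ := by
      rw [hdd, inner_sub_right, inner_neg_right, real_inner_smul_right,
        real_inner_smul_right, horth x hx]
      ring
    have hK' : ⟪deriv (deriv g) x, deriv g x⟫ = -(1 / x) * ⟪deriv g x, deriv g x⟫ := by
      rw [real_inner_comm]; exact hK
    have hzero : 2 * x * ⟪deriv g x, deriv g x⟫ +
        (fun r : ℝ => r ^ 2) x *
          (⟪deriv g x, deriv (deriv g) x⟫ + ⟪deriv (deriv g) x, deriv g x⟫) = 0 := by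
      simp only [hK, hK']
      field_simp
      ring
    rw [hzero] at hmul
    exact hmul
  have hφconst : ∀ x ∈ s, ∀ y ∈ s, φ y = φ x := by
    intro x hx y hy
    have := Convex.norm_image_sub_le_of_norm_hasDerivWithin_le
      (f := φ) (f' := fun _ => (0 : ℝ)) (s := s) (C := 0)
      (fun z hz => (hφ z hz).hasDerivWithinAt) (fun z hz => by simp) hconv hx hy
    simp only [norm_zero, zero_mul] at this
    have := norm_le_zero_iff.mp (by simpa using this)
    exact sub_eq_zero.mp this
  have hφzero : ∀ r ∈ s, φ r = 0 := by
    intro r hr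
    have hle : φ r ≤ 0 := by
      have htend : Tendsto (fun t : ℝ => t ^ 2 * M ^ 2) (𝓝[>] (0 : ℝ)) (𝓝 0) := by
        have : Tendsto (fun t : ℝ => t ^ 2 * M ^ 2) (𝓝 (0 : ℝ)) (𝓝 (0 ^ 2 * M ^ 2)) := by
          exact (continuous_pow 2).mul continuous_const |>.tendsto 0
        simpa using this.mono_left nhdsWithin_le_nhds
      have hev : ∀ᶠ t in 𝓝[>] (0 : ℝ), φ r ≤ t ^ 2 * M ^ 2 := by
        have hmem : Set.Ioo (0 : ℝ) ε ∈ 𝓝[>] (0 : ℝ) :=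
          Ioo_mem_nhdsGT_of_mem (by constructor <;> [rfl; exact hε])
        filter_upwards [hmem] with t ht
        have hts : t ∈ s := ⟨ht.1, lt_of_lt_of_le ht.2 hεb⟩
        have h1 : φ r = φ t := hφconst t hts r hr
        have h2 : φ t = t ^ 2 * ‖deriv g t‖ ^ 2 := by
          show t ^ 2 * ⟪deriv g t, deriv g t⟫ = _
          rw [real_inner_self_eq_norm_sq]
        have h3 : ‖deriv g t‖ ^ 2 ≤ M ^ 2 := by
          have := hM t ht
          nlinarith [norm_nonneg (deriv g t)]
        have h4 : t ^ 2 * ‖deriv g t‖ ^ 2 ≤ t ^ 2 * M ^ 2 :=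
          mul_le_mul_of_nonneg_left h3 (sq_nonneg t)
        rw [h1, h2]; exact h4
      exact ge_of_tendsto htend hev
    have hge : 0 ≤ φ r := by
      rw [hφdef]
      exact mul_nonneg (sq_nonneg r) real_inner_self_nonneg
    linarith
  have hderiv0 : ∀ r ∈ s, deriv g r = 0 := by
    intro r hr
    have h0 : r ^ 2 * ⟪deriv g r, deriv g r⟫ = 0 := hφzero r hr
    have hr2 : r ^ 2 ≠ 0 := pow_ne_zero 2 (ne_of_gt hr.1)
    rcases mul_eq_zero.mp h0 with h | h
    · exact absurd h hr2
    · exact inner_self_eq_zero.mp h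
  refine ⟨hderiv0, ⟨g (b / 2), ?_⟩⟩
  have hb2 : b / 2 ∈ s := ⟨by linarith, by linarith⟩
  intro r hr
  have := Convex.norm_image_sub_le_of_norm_hasDerivWithin_le
    (f := g) (f' := fun x => deriv g x) (s := s) (C := 0)
    (fun z hz => (hgd z hz).hasDerivWithinAt)
    (fun z hz => by show ‖deriv g z‖ ≤ 0; rw [hderiv0 z hz]; simp) hconv hb2 hr
  simp only [zero_mul] at this
  have := norm_le_zero_iff.mp (by simpa using this)
  exact sub_eq_zero.mp this

end
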